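/- Let X be a partially ordered set, C a category admitting all small products, M : X^{op} → C a coefficient system, and for each p ∈ X a pointed endofunctor (A_p, η_p : Id → A_p) of C. Define the adelic cochains C^s = ∏_{p0} A_{p0}( ∏_{p1 < p0} A_{p1}( ⋯ ∏_{ps < p_{s-1}} A_{ps} M(p_s) ⋯ )) over flags p0 > p1 > ⋯ > ps in X, and maps δ_i : C^s → C^{s+1} for 0 ≤ i ≤ s+1, where for i ≤ s the map δ_i is given by applying the unit transformation N → A_{p_i}N at the i-th spot of an (s+1)-flag (and the same sequence of products and functors to domain and codomain), and δ_{s+1} is induced by the structure maps M(p_s) → M(p_{s+1}) of the coefficient system followed by the unit of A_{p_{s+1}}. Then for all 0 ≤ a < b ≤ s+2 one has δ_b ∘ δ_a = δ_a ∘ δ_{b−1} as maps C^s → C^{s+2}; consequently δ := Σ_i (−1)^i δ_i satisfies δ ∘ δ = 0, so (C^*, δ) is a cochain complex. -/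

import Mathlib

open CategoryTheory CategoryTheory.Limits Opposite

universe u v w

section AdelicMachinery

variable {X : Type u} [PartialOrder X] {C : Type v} [Category.{w} C]
  [HasProducts.{u} C]
variable (A : X → C ⥤ C) (η : ∀ p, 𝟭 C ⟶ A p) (M : Xᵒᵖ ⥤ C)

/-- The nested adelic objects over flags in the poset `X`:
`G s p = A_p (∏_{q < p} A_q ( ⋯ ∏_{q_s < q_{s-1}} A_{q_s}(M(q_s)) ⋯ ))`. -/
noncomputable def G : ℕ → X → C
  | 0, p => (A p).obj (M.obj (op p))
  | k + 1, p => (A p).obj (∏ᶜ fun q : {q : X // q < p} => G k q.1)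

/-- Insertion of a new flag entry immediately below `p`, via the units `N → A_q N`. -/
noncomputable def phi (k : ℕ) (p : X) :
    (∏ᶜ fun q : {q : X // q < p} => G A M k q.1) ⟶
      (∏ᶜ fun q : {q : X // q < p} => G A M (k + 1) q.1) :=
  Pi.lift fun q' =>
    (Pi.lift fun r : {r : X // r < q'.1} =>
        Pi.π (fun q : {q : X // q < p} => G A M k q.1) ⟨r.1, lt_trans r.2 q'.2⟩) ≫
      (η q'.1).app (∏ᶜ fun r : {r : X // r < q'.1} => G A M k r.1)

/-- Insertion below the innermost flag entry: the coefficient structure maps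
`M(p) → M(q)` followed by the units `M(q) → A_q M(q)`. -/
noncomputable def psi (p : X) :
    M.obj (op p) ⟶ (∏ᶜ fun q : {q : X // q < p} => G A M 0 q.1) :=
  Pi.lift fun q => M.map (homOfLE (le_of_lt q.2)).op ≫ (η q.1).app (M.obj (op q.1))

/-- `ins i s p : G s p ⟶ G (s+1) p` inserts a new flag entry at depth `i+1`
below `p`. -/
noncomputable def ins : ℕ → (s : ℕ) → (p : X) → (G A M s p ⟶ G A M (s + 1) p)
  | 0, 0, p => (A p).map (psi A η M p)
  | 0, k + 1, p => (A p).map (phi A η M k p)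
  | _ + 1, 0, p => (A p).map (psi A η M p)
  | i + 1, k + 1, p => (A p).map
      (CategoryTheory.Limits.Pi.map fun q : {q : X // q < p} => ins i k q.1)

/-- The `i`-th face map `δᵢ : C^s ⟶ C^{s+1}` of the adelic cochain complex:
`δ₀` inserts a new initial flag entry via the unit, `δᵢ` (`1 ≤ i ≤ s`) inserts a
flag entry at depth `i` via the unit, `δ_{s+1}` inserts a final entry via the
coefficient structure maps. -/
noncomputable def delta (s i : ℕ) :
    (∏ᶜ fun p : X => G A M s p) ⟶ (∏ᶜ fun p : X => G A M (s + 1) p) :=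
  if i = 0 then
    Pi.lift fun p =>
      (Pi.lift fun q : {q : X // q < p} => Pi.π (fun p' : X => G A M s p') q.1) ≫
        (η p).app (∏ᶜ fun q : {q : X // q < p} => G A M s q.1)
  else
    CategoryTheory.Limits.Pi.map fun p => ins (A := A) (η := η) (M := M) (i - 1) s p

-- ## Auxiliary lemmas

lemma ins_zero' (i : ℕ) (p : X) : ins A η M i 0 p = (A p).map (psi A η M p) := by
  cases i <;> rfl

lemma ins_zero_succ' (k : ℕ) (p : X) :
    ins A η M 0 (k+1) p = (A p).map (phi A η M k p) := rfl

lemma ins_succ_succ' (i k : ℕ) (p : X) :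
    ins A η M (i+1) (k+1) p =
      (A p).map (CategoryTheory.Limits.Pi.map fun q : {q : X // q < p} =>
        ins A η M i k q.1) := rfl

lemma psi_pi' (p : X) (q : {q : X // q < p}) :
    psi A η M p ≫ Pi.π (fun q : {q : X // q < p} => G A M 0 q.1) q =
      M.map (homOfLE (le_of_lt q.2)).op ≫ (η q.1).app (M.obj (op q.1)) :=
  Pi.lift_π _ _

lemma phi_pi' (k : ℕ) (p : X) (q : {q : X // q < p}) :
    phi A η M k p ≫ Pi.π (fun q : {q : X // q < p} => G A M (k+1) q.1) q =
      (Pi.lift fun r : {r : X // r < q.1} =>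
          Pi.π (fun t : {t : X // t < p} => G A M k t.1) ⟨r.1, lt_trans r.2 q.2⟩) ≫
        (η q.1).app (∏ᶜ fun r : {r : X // r < q.1} => G A M k r.1) :=
  Pi.lift_π _ _

lemma res_natural' {F F' : X → C} (f : ∀ x : X, F x ⟶ F' x) (p : X) (q : {q : X // q < p}) :
    (Pi.lift fun r : {r : X // r < q.1} =>
        Pi.π (fun t : {t : X // t < p} => F t.1) ⟨r.1, lt_trans r.2 q.2⟩) ≫
      (CategoryTheory.Limits.Pi.map fun r : {r : X // r < q.1} => f r.1) =
    (CategoryTheory.Limits.Pi.map fun t : {t : X // t < p} => f t.1) ≫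
      (Pi.lift fun r : {r : X // r < q.1} =>
        Pi.π (fun t : {t : X // t < p} => F' t.1) ⟨r.1, lt_trans r.2 q.2⟩) := by
  ext r
  simp

lemma psi_step' (p : X) :
    psi A η M p ≫ (CategoryTheory.Limits.Pi.map fun q : {q : X // q < p} =>
        ins A η M 0 0 q.1) =
    psi A η M p ≫ phi A η M 0 p := by
  have core : ∀ q : {q : X // q < p},
      M.map (homOfLE (le_of_lt q.2)).op ≫ psi A η M q.1 =
      psi A η M p ≫ (Pi.lift fun r : {r : X // r < q.1} =>
        Pi.π (fun t : {t : X // t < p} => G A M 0 t.1) ⟨r.1, lt_trans r.2 q.2⟩) := by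
    intro q; ext r
    simp only [psi, Category.assoc, limit.lift_π, Fan.mk_pt, Fan.mk_π_app]
    erw [← Category.assoc, ← M.map_comp, ← op_comp, homOfLE_comp]
  ext q
  simp only [Category.assoc, limMap_π, Discrete.natTrans_app, Limits.Pi.map_π]
  erw [ins_zero', ← Category.assoc, psi_pi', Category.assoc, ← (η q.1).naturality,
    Functor.id_map, ← Category.assoc, core q, Category.assoc, phi_pi']
  rfl

lemma phi_phi' (k : ℕ) (p : X) :
    phi A η M k p ≫ (CategoryTheory.Limits.Pi.map fun q : {q : X // q < p} =>
        ins A η M 0 (k+1) q.1) =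
    phi A η M k p ≫ phi A η M (k+1) p := by
  have core : ∀ q : {q : X // q < p},
      (Pi.lift fun r : {r : X // r < q.1} =>
          Pi.π (fun t : {t : X // t < p} => G A M k t.1) ⟨r.1, lt_trans r.2 q.2⟩) ≫
        phi A η M k q.1 =
      phi A η M k p ≫ (Pi.lift fun r : {r : X // r < q.1} =>
        Pi.π (fun t : {t : X // t < p} => G A M (k+1) t.1) ⟨r.1, lt_trans r.2 q.2⟩) := by
    intro q; ext r
    simp only [Category.assoc, phi_pi', limit.lift_π, Fan.mk_pt, Fan.mk_π_app]
    erw [← Category.assoc]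
    congr 1
    ext t
    simp
  ext q
  simp only [Category.assoc, limMap_π, Discrete.natTrans_app, Limits.Pi.map_π]
  erw [ins_zero_succ', ← Category.assoc, phi_pi', Category.assoc, ← (η q.1).naturality,
    Functor.id_map, ← Category.assoc, core q, Category.assoc, phi_pi']
  rfl

lemma phi_map' (j k : ℕ) (p : X) :
    phi A η M k p ≫ (CategoryTheory.Limits.Pi.map fun q : {q : X // q < p} =>
        ins A η M (j+1) (k+1) q.1) =
    (CategoryTheory.Limits.Pi.map fun q : {q : X // q < p} => ins A η M j k q.1) ≫
      phi A η M (k+1) p := by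
  ext q
  simp only [Category.assoc, limMap_π, Discrete.natTrans_app, Limits.Pi.map_π]
  erw [ins_succ_succ', ← Category.assoc, phi_pi', Category.assoc, ← (η q.1).naturality,
    Functor.id_map, ← Category.assoc, res_natural' (fun x => ins A η M j k x) p q,
    Category.assoc, phi_pi']
  rfl

lemma ins_comm' : ∀ (s a j : ℕ), a ≤ j → ∀ p : X,
    ins A η M a s p ≫ ins A η M (j+1) (s+1) p =
      ins A η M j s p ≫ ins A η M a (s+1) p := by
  intro s
  induction s with
  | zero =>
    intro a j haj p
    cases a with
    | zero =>
      have e : (fun q : {q : X // q < p} => ins A η M j 0 q.1) =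
          fun q : {q : X // q < p} => ins A η M 0 0 q.1 :=
        funext fun q => by rw [ins_zero', ins_zero']
      erw [ins_zero', ins_succ_succ', e, ins_zero' A η M j p, ins_zero_succ',
        ← Functor.map_comp, ← Functor.map_comp, psi_step']
    | succ a' =>
      have e : (fun q : {q : X // q < p} => ins A η M j 0 q.1) =
          fun q : {q : X // q < p} => ins A η M a' 0 q.1 :=
        funext fun q => by rw [ins_zero', ins_zero']
      rw [ins_zero', ins_succ_succ', e, ins_zero' A η M j p, ins_succ_succ']
  | succ k IH =>
    intro a j haj p
    cases a with
    | zero =>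
      cases j with
      | zero =>
        erw [ins_zero_succ', ins_succ_succ', ins_zero_succ',
          ← Functor.map_comp, ← Functor.map_comp, phi_phi']
      | succ j' =>
        erw [ins_zero_succ', ins_succ_succ', ins_succ_succ' A η M j' k p,
          ins_zero_succ', ← Functor.map_comp, ← Functor.map_comp, phi_map']
    | succ a' =>
      obtain ⟨j', rfl⟩ : ∃ j', j = j' + 1 := ⟨j - 1, by omega⟩
      erw [ins_succ_succ' A η M a' k p, ins_succ_succ' A η M (j'+1) (k+1) p,
        ins_succ_succ' A η M j' k p, ins_succ_succ' A η M a' (k+1) p,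
        ← Functor.map_comp, ← Functor.map_comp, Limits.Pi.map_comp_map, Limits.Pi.map_comp_map]
      have e : (fun q : {q : X // q < p} =>
            ins A η M a' k q.1 ≫ ins A η M (j'+1) (k+1) q.1) =
          fun q : {q : X // q < p} =>
            ins A η M j' k q.1 ≫ ins A η M a' (k+1) q.1 :=
        funext fun q => IH a' j' (by omega) q.1
      rw [e]

lemma delta_succ' (s i : ℕ) :
    delta A η M s (i+1) =
      CategoryTheory.Limits.Pi.map fun p => ins A η M i s p := by
  simp [delta]

lemma delta_zero_pi' (s : ℕ) (p : X) :
    delta A η M s 0 ≫ Pi.π (fun p' : X => G A M (s+1) p') p =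
      (Pi.lift fun q : {q : X // q < p} => Pi.π (fun p' : X => G A M s p') q.1) ≫
        (η p).app (∏ᶜ fun q : {q : X // q < p} => G A M s q.1) := by
  simp [delta]
  rfl

lemma resX_natural' {F F' : X → C} (f : ∀ x : X, F x ⟶ F' x) (p : X) :
    (Pi.lift fun q : {q : X // q < p} => Pi.π (fun x : X => F x) q.1) ≫
      (CategoryTheory.Limits.Pi.map fun q : {q : X // q < p} => f q.1) =
    (CategoryTheory.Limits.Pi.map f) ≫
      (Pi.lift fun q : {q : X // q < p} => Pi.π (fun x : X => F' x) q.1) := by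
  ext q
  simp

lemma delta_comm' (s a b : ℕ) (hab : a < b) (hb : b ≤ s + 2) :
    delta A η M s a ≫ delta A η M (s + 1) b =
      delta A η M s (b - 1) ≫ delta A η M (s + 1) a := by
  obtain ⟨j, rfl⟩ : ∃ j, b = j + 1 := ⟨b - 1, by omega⟩
  simp only [Nat.add_sub_cancel]
  cases a with
  | zero =>
    cases j with
    | zero =>
      rw [delta_succ']
      have core : ∀ p : X,
          (Pi.lift fun q : {q : X // q < p} => Pi.π (fun x : X => G A M s x) q.1) ≫
            phi A η M s p =
          delta A η M s 0 ≫
            (Pi.lift fun q : {q : X // q < p} =>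
              Pi.π (fun x : X => G A M (s+1) x) q.1) := by
        intro p; ext q
        simp only [Category.assoc, phi_pi', limit.lift_π, Fan.mk_pt, Fan.mk_π_app,
          delta_zero_pi']
        erw [← Category.assoc]
        congr 1
        ext r
        simp
      ext p
      simp only [Category.assoc, limMap_π, Discrete.natTrans_app, Limits.Pi.map_π]
      erw [ins_zero_succ', ← Category.assoc, delta_zero_pi', Category.assoc,
        ← (η p).naturality, Functor.id_map, ← Category.assoc, core p, Category.assoc,
        delta_zero_pi']
      rfl
    | succ j' =>
      rw [delta_succ', delta_succ']
      ext p
      simp only [Category.assoc, limMap_π, Discrete.natTrans_app, Limits.Pi.map_π]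
      erw [ins_succ_succ', ← Category.assoc, delta_zero_pi', Category.assoc,
        ← (η p).naturality, Functor.id_map, ← Category.assoc,
        resX_natural' (fun x => ins A η M j' s x) p, Category.assoc, delta_zero_pi']
      rfl
  | succ a' =>
    obtain ⟨j', rfl⟩ : ∃ j', j = j' + 1 := ⟨j - 1, by omega⟩
    erw [delta_succ', delta_succ', delta_succ', delta_succ', Limits.Pi.map_comp_map,
      Limits.Pi.map_comp_map]
    have e : (fun p : X => ins A η M a' s p ≫ ins A η M (j'+1) (s+1) p) =
        fun p : X => ins A η M j' s p ≫ ins A η M a' (s+1) p :=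
      funext fun p => ins_comm' A η M s a' j' (by omega) p
    rw [e]

end AdelicMachinery

/-- for a poset `X`, a category `C` with small products, a coefficient
system `M : Xᵒᵖ ⥤ C` and pointed endofunctors `(A_p, η_p)`, the adelic face maps
satisfy the cosimplicial identity `δ_b ∘ δ_a = δ_a ∘ δ_{b-1}` for `a < b`; hence
(when `C` is preadditive) `δ = Σ (-1)ⁱ δᵢ` satisfies `δ ∘ δ = 0`, so the adelic
cochains form a cochain complex. -/
theorem adelic_cochain_complex
    {X : Type u} [PartialOrder X] {C : Type v} [Category.{w} C] [Preadditive C]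
    [HasProducts.{u} C]
    (A : X → C ⥤ C) (η : ∀ p, 𝟭 C ⟶ A p) (M : Xᵒᵖ ⥤ C) :
    (∀ s a b : ℕ, a < b → b ≤ s + 2 →
      delta A η M s a ≫ delta A η M (s + 1) b =
        delta A η M s (b - 1) ≫ delta A η M (s + 1) a) ∧
    (∀ s : ℕ,
      (∑ i ∈ Finset.range (s + 2), ((-1 : ℤ) ^ i) • delta A η M s i) ≫
        (∑ i ∈ Finset.range (s + 3), ((-1 : ℤ) ^ i) • delta A η M (s + 1) i) = 0) := by
  refine ⟨delta_comm' A η M, fun s => ?_⟩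
  rw [Preadditive.sum_comp]
  simp only [Preadditive.comp_sum, Preadditive.zsmul_comp, Preadditive.comp_zsmul, smul_smul]
  rw [← Finset.sum_product']
  classical
  rw [← Finset.sum_filter_add_sum_filter_not (Finset.range (s+2) ×ˢ Finset.range (s+3))
    (fun ij => ij.2 ≤ ij.1)]
  have h2 : ∑ ij ∈ (Finset.range (s+2) ×ˢ Finset.range (s+3)).filter (fun ij => ¬ ij.2 ≤ ij.1),
      ((-1:ℤ)^ij.2 * (-1)^ij.1) • (delta A η M s ij.1 ≫ delta A η M (s+1) ij.2) =
    ∑ ij ∈ (Finset.range (s+2) ×ˢ Finset.range (s+3)).filter (fun ij => ij.2 ≤ ij.1),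
      -(((-1:ℤ)^ij.2 * (-1)^ij.1) • (delta A η M s ij.1 ≫ delta A η M (s+1) ij.2)) := by
    refine Finset.sum_nbij' (fun ij => (ij.2 - 1, ij.1)) (fun ij => (ij.2, ij.1 + 1))
      ?_ ?_ ?_ ?_ ?_
    · rintro ⟨i, j⟩ h
      simp only [Finset.mem_filter, Finset.mem_product, Finset.mem_range] at h ⊢
      omega
    · rintro ⟨i, j⟩ h
      simp only [Finset.mem_filter, Finset.mem_product, Finset.mem_range] at h ⊢
      omega
    · rintro ⟨i, j⟩ h
      simp only [Finset.mem_filter, Finset.mem_product, Finset.mem_range] at h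
      dsimp only
      rw [Prod.mk.injEq]
      omega
    · rintro ⟨i, j⟩ h
      simp only [Finset.mem_filter, Finset.mem_product, Finset.mem_range] at h
      dsimp only
      rw [Prod.mk.injEq]
      omega
    · rintro ⟨i, j⟩ h
      simp only [Finset.mem_filter, Finset.mem_product, Finset.mem_range] at h
      obtain ⟨j, rfl⟩ : ∃ j', j = j' + 1 := ⟨j - 1, by omega⟩
      rw [delta_comm' A η M s i (j+1) (by omega) (by omega)]
      simp only [Nat.add_sub_cancel]
      rw [← neg_smul]
      congr 1
      rw [pow_succ]
      ring
  rw [h2, ← Finset.sum_add_distrib]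
  simp
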